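/- Fix R > 0 and define F_R : L⁴(0,1) → L²(0,1) by F_R(x) = x² if ‖x‖_{L⁴} ≤ R and F_R(x) = R²·x²/‖x‖²_{L⁴} if ‖x‖_{L⁴} ≥ R. Then for every γ ∈ [0,1] and all x, y ∈ L⁴(0,1) one has ‖F_R(x) − F_R(y)‖_{L²} ≤ (2R)^{2−γ}·‖x − y‖_{L⁴}^γ. -/

import Mathlib

open MeasureTheory
open scoped ENNReal

instance : Fact ((1:ℝ≥0∞) ≤ 4) := ⟨by norm_num⟩

lemma quarter_add : (1:ℝ≥0∞)/2 = 1/4 + 1/4 := by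
  rw [ENNReal.div_add_div_same]
  rw [ENNReal.div_eq_div_iff] <;> norm_num

instance : ENNReal.HolderTriple 4 4 2 := ⟨by simpa only [one_div] using quarter_add.symm⟩

section aux
variable {α : Type*} {m : MeasurableSpace α} {μ : Measure α}

lemma aux_memLp (x : Lp ℝ 4 μ) : MemLp (fun ξ => (x : α → ℝ) ξ ^ 2) 2 μ := by
  have h : MemLp ((x : α → ℝ) • (x : α → ℝ)) 2 μ :=
    (Lp.memLp x).smul (Lp.memLp x)
  have he : ((x : α → ℝ) • (x : α → ℝ)) = fun ξ => (x : α → ℝ) ξ ^ 2 := by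
    funext ξ; simp [sq]
  rwa [he] at h

lemma aux_eLpNorm_sq (x : Lp ℝ 4 μ) :
    eLpNorm (fun ξ => (x : α → ℝ) ξ ^ 2) 2 μ = (eLpNorm x 4 μ) ^ (2:ℝ) := by
  have h := eLpNorm_norm_rpow (x : α → ℝ) (p := 2) (μ := μ) (q := 2) (by norm_num)
  have h2 : (2:ℝ≥0∞) * ENNReal.ofReal 2 = 4 := by rw [ENNReal.ofReal_ofNat]; norm_num
  rw [h2] at h
  rw [← h]
  congr 1
  funext ξ
  rw [show ((2:ℝ)) = ((2:ℕ):ℝ) by norm_num, Real.rpow_natCast]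
  simp [Real.norm_eq_abs, sq_abs]

lemma aux_norm_sq (x : Lp ℝ 4 μ) : ‖(aux_memLp x).toLp _‖ = ‖x‖ ^ 2 := by
  rw [Lp.norm_toLp, aux_eLpNorm_sq, ← ENNReal.toReal_rpow, Lp.norm_def]
  rw [show ((2:ℝ)) = ((2:ℕ):ℝ) by norm_num, Real.rpow_natCast]

lemma aux_holder (x y : Lp ℝ 4 μ) :
    eLpNorm ((fun ξ => (x : α → ℝ) ξ ^ 2) - fun ξ => (y : α → ℝ) ξ ^ 2) 2 μ ≤
      eLpNorm ((x : α → ℝ) - (y : α → ℝ)) 4 μ * eLpNorm ((x : α → ℝ) + (y : α → ℝ)) 4 μ := by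
  have h := eLpNorm_smul_le_mul_eLpNorm (μ := μ) (p := 4) (q := 4) (r := 2)
      ((Lp.aestronglyMeasurable x).add (Lp.aestronglyMeasurable y))
      ((Lp.aestronglyMeasurable x).sub (Lp.aestronglyMeasurable y))
  have hfun : (((x : α → ℝ) - (y : α → ℝ)) • ((x : α → ℝ) + (y : α → ℝ)))
      = (fun ξ => (x : α → ℝ) ξ ^ 2) - fun ξ => (y : α → ℝ) ξ ^ 2 := by
    funext ξ
    simp only [Pi.smul_apply, Pi.sub_apply, Pi.add_apply, Pi.mul_apply, smul_eq_mul]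
    ring
  rwa [hfun] at h

end aux

set_option maxHeartbeats 1000000 in
lemma master_ineq {H : Type*} [NormedAddCommGroup H] [InnerProductSpace ℝ H]
    {R A B c d : ℝ} (hR : 0 < R) (hA : 0 ≤ A) (hB : 0 ≤ B)
    (hc0 : 0 ≤ c) (hd0 : 0 ≤ d)
    (hc : c * A ^ 2 = (min A R) ^ 2) (hd : d * B ^ 2 = (min B R) ^ 2)
    {P Q : H} (hP : ‖P‖ = A ^ 2) (hQ : ‖Q‖ = B ^ 2) :
    (A + B) * ‖c • P - d • Q‖ ≤ 2 * R * ‖P - Q‖ := by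
  set s : ℝ := inner ℝ P Q with hsdef
  have habs : |s| ≤ A ^ 2 * B ^ 2 := by
    have := abs_real_inner_le_norm P Q
    rwa [hP, hQ] at this
  have hsle : s ≤ A ^ 2 * B ^ 2 := (abs_le.mp habs).2
  have hsge : -(A ^ 2 * B ^ 2) ≤ s := (abs_le.mp habs).1
  have h1 : ‖c • P - d • Q‖ ^ 2
      = ((min A R) ^ 2) ^ 2 - 2 * (c * d) * s + ((min B R) ^ 2) ^ 2 := by
    rw [norm_sub_sq_real, norm_smul, norm_smul, real_inner_smul_left, real_inner_smul_right,
      hP, hQ, Real.norm_eq_abs, Real.norm_eq_abs, abs_of_nonneg hc0, abs_of_nonneg hd0,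
      ← hsdef, ← hc, ← hd]
    ring
  have h2 : ‖P - Q‖ ^ 2 = (A ^ 2) ^ 2 - 2 * s + (B ^ 2) ^ 2 := by
    rw [norm_sub_sq_real, hP, hQ, ← hsdef]
  -- endpoint inequality 1 (s = A²B²)
  have e1 : (A + B) ^ 2 * ((min A R) ^ 2 - (min B R) ^ 2) ^ 2
      ≤ (2 * R) ^ 2 * (A ^ 2 - B ^ 2) ^ 2 := by
    rcases le_total A R with h | h <;> rcases le_total B R with h' | h'
    · rw [min_eq_left h, min_eq_left h']
      have k : (0:ℝ) ≤ 4 * R ^ 2 - (A + B) ^ 2 := by nlinarith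
      nlinarith [mul_nonneg k (sq_nonneg (A ^ 2 - B ^ 2))]
    · rw [min_eq_left h, min_eq_right h']
      have hv : (0:ℝ) ≤ R - A := by linarith
      have hu : (0:ℝ) ≤ B - R := by linarith
      have f1 : 0 ≤ 2 * R * (B ^ 2 - A ^ 2) - (A + B) * (R ^ 2 - A ^ 2) := by
        nlinarith [mul_nonneg hA (mul_nonneg hu hu), mul_nonneg hA (mul_nonneg hv hv),
          mul_nonneg (mul_nonneg hA hA) hu, mul_nonneg (mul_nonneg hA hA) hv,
          mul_nonneg hA (mul_nonneg hu hv), mul_nonneg hv (mul_nonneg hu hu),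
          mul_nonneg hv (mul_nonneg hv hv), mul_nonneg hu (mul_nonneg hv hv)]
      have f2 : 0 ≤ 2 * R * (B ^ 2 - A ^ 2) + (A + B) * (R ^ 2 - A ^ 2) := by
        nlinarith [mul_nonneg hR.le (mul_nonneg hu hu), mul_nonneg hR.le (mul_nonneg hu hv),
          mul_nonneg (add_nonneg hA hB) (mul_nonneg hv hv),
          mul_nonneg (add_nonneg hA hB) (mul_nonneg hA hv), mul_nonneg hR.le (mul_nonneg hA hu)]
      nlinarith [mul_nonneg f1 f2]
    · rw [min_eq_right h, min_eq_left h']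
      have hv : (0:ℝ) ≤ R - B := by linarith
      have hu : (0:ℝ) ≤ A - R := by linarith
      have f1 : 0 ≤ 2 * R * (A ^ 2 - B ^ 2) - (A + B) * (R ^ 2 - B ^ 2) := by
        nlinarith [mul_nonneg hB (mul_nonneg hu hu), mul_nonneg hB (mul_nonneg hv hv),
          mul_nonneg (mul_nonneg hB hB) hu, mul_nonneg (mul_nonneg hB hB) hv,
          mul_nonneg hB (mul_nonneg hu hv), mul_nonneg hv (mul_nonneg hu hu),
          mul_nonneg hv (mul_nonneg hv hv), mul_nonneg hu (mul_nonneg hv hv)]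
      have f2 : 0 ≤ 2 * R * (A ^ 2 - B ^ 2) + (A + B) * (R ^ 2 - B ^ 2) := by
        nlinarith [mul_nonneg hR.le (mul_nonneg hu hu), mul_nonneg hR.le (mul_nonneg hu hv),
          mul_nonneg (add_nonneg hA hB) (mul_nonneg hv hv),
          mul_nonneg (add_nonneg hA hB) (mul_nonneg hB hv), mul_nonneg hR.le (mul_nonneg hB hu)]
      nlinarith [mul_nonneg f1 f2]
    · rw [min_eq_right h, min_eq_right h']
      have hz : ((R:ℝ) ^ 2 - R ^ 2) ^ 2 = 0 := by ring
      rw [hz, mul_zero]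
      positivity
  -- endpoint inequality 2 (s = -A²B²)
  have e0 : (A + B) * ((min A R) ^ 2 + (min B R) ^ 2) ≤ 2 * R * (A ^ 2 + B ^ 2) := by
    rcases le_total A R with h | h <;> rcases le_total B R with h' | h'
    · rw [min_eq_left h, min_eq_left h']
      nlinarith [mul_nonneg (by linarith : (0:ℝ) ≤ 2 * R - A - B)
        (by positivity : (0:ℝ) ≤ A ^ 2 + B ^ 2)]
    · rw [min_eq_left h, min_eq_right h']
      have hv : (0:ℝ) ≤ R - A := by linarith
      have hu : (0:ℝ) ≤ B - R := by linarith
      nlinarith [mul_nonneg hA (mul_nonneg hu hu), mul_nonneg hA (mul_nonneg hv hv),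
        mul_nonneg (mul_nonneg hA hA) hu, mul_nonneg (mul_nonneg hA hA) hv,
        mul_nonneg hA (mul_nonneg hu hv), mul_nonneg hv (mul_nonneg hu hu),
        mul_nonneg hv (mul_nonneg hv hv), mul_nonneg hu (mul_nonneg hv hv)]
    · rw [min_eq_right h, min_eq_left h']
      have hv : (0:ℝ) ≤ R - B := by linarith
      have hu : (0:ℝ) ≤ A - R := by linarith
      nlinarith [mul_nonneg hB (mul_nonneg hu hu), mul_nonneg hB (mul_nonneg hv hv),
        mul_nonneg (mul_nonneg hB hB) hu, mul_nonneg (mul_nonneg hB hB) hv,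
        mul_nonneg hB (mul_nonneg hu hv), mul_nonneg hv (mul_nonneg hu hu),
        mul_nonneg hv (mul_nonneg hv hv), mul_nonneg hu (mul_nonneg hv hv)]
    · rw [min_eq_right h, min_eq_right h']
      nlinarith [mul_nonneg hA (by linarith : (0:ℝ) ≤ A - R),
        mul_nonneg hB (by linarith : (0:ℝ) ≤ B - R),
        mul_nonneg hR.le (by linarith : (0:ℝ) ≤ A - R),
        mul_nonneg hR.le (by linarith : (0:ℝ) ≤ B - R)]
  have e2 : (A + B) ^ 2 * ((min A R) ^ 2 + (min B R) ^ 2) ^ 2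
      ≤ (2 * R) ^ 2 * (A ^ 2 + B ^ 2) ^ 2 := by
    have l1 : 0 ≤ (A + B) * ((min A R) ^ 2 + (min B R) ^ 2) := by positivity
    have := mul_self_le_mul_self l1 e0
    nlinarith [this]
  have hcd' : (c * d) * (A ^ 2 * B ^ 2) * (A + B) ^ 2
      = (min A R) ^ 2 * (min B R) ^ 2 * (A + B) ^ 2 := by
    rw [← hc, ← hd]; ring
  have key : (A + B) ^ 2 * ‖c • P - d • Q‖ ^ 2 ≤ (2 * R) ^ 2 * ‖P - Q‖ ^ 2 := by
    rw [h1, h2]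
    rcases le_total (c * d * (A + B) ^ 2) (4 * R ^ 2) with hco | hco
    · have hp : 0 ≤ (A ^ 2 * B ^ 2 - s) * (4 * R ^ 2 - c * d * (A + B) ^ 2) :=
        mul_nonneg (by linarith) (by linarith)
      linarith [e1, hp, hcd']
    · have hp : 0 ≤ (s + A ^ 2 * B ^ 2) * (c * d * (A + B) ^ 2 - 4 * R ^ 2) :=
        mul_nonneg (by linarith) (by linarith)
      linarith [e2, hp, hcd']
  have hn1 : 0 ≤ (A + B) * ‖c • P - d • Q‖ := by positivity
  have hn2 : 0 ≤ 2 * R * ‖P - Q‖ := by positivity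
  have keyX : ((A + B) * ‖c • P - d • Q‖) ^ 2 ≤ (2 * R * ‖P - Q‖) ^ 2 := by
    calc ((A + B) * ‖c • P - d • Q‖) ^ 2 = (A + B) ^ 2 * ‖c • P - d • Q‖ ^ 2 := by ring
    _ ≤ (2 * R) ^ 2 * ‖P - Q‖ ^ 2 := key
    _ = (2 * R * ‖P - Q‖) ^ 2 := by ring
  have h := Real.sqrt_le_sqrt keyX
  rwa [Real.sqrt_sq hn1, Real.sqrt_sq hn2] at h

open MeasureTheory
open scoped ENNReal

set_option maxHeartbeats 2000000 in
theorem stmt9 (R : ℝ) (hR : 0 < R)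
    (F : Lp ℝ 4 (volume.restrict (Set.Ioo (0:ℝ) 1)) →
      Lp ℝ 2 (volume.restrict (Set.Ioo (0:ℝ) 1)))
    (hF1 : ∀ x, ‖x‖ ≤ R → (F x : ℝ → ℝ) =ᵐ[volume.restrict (Set.Ioo (0:ℝ) 1)]
      fun ξ => (x : ℝ → ℝ) ξ ^ 2)
    (hF2 : ∀ x, R ≤ ‖x‖ → (F x : ℝ → ℝ) =ᵐ[volume.restrict (Set.Ioo (0:ℝ) 1)]
      fun ξ => R ^ 2 * (x : ℝ → ℝ) ξ ^ 2 / ‖x‖ ^ 2) :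
    ∀ γ : ℝ, γ ∈ Set.Icc (0:ℝ) 1 → ∀ x y,
      ‖F x - F y‖ ≤ (2 * R) ^ (2 - γ) * ‖x - y‖ ^ γ := by
  intro γ hγ x y
  obtain ⟨hγ0, hγ1⟩ := hγ
  -- representation of F z
  have rep : ∀ z, ∃ c : ℝ, 0 ≤ c ∧ c * ‖z‖ ^ 2 = (min ‖z‖ R) ^ 2 ∧
      F z = c • ((aux_memLp z).toLp _) := by
    intro z
    rcases le_total ‖z‖ R with h | h
    · refine ⟨1, zero_le_one, by rw [min_eq_left h]; ring, ?_⟩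
      rw [one_smul]
      exact Lp.ext ((hF1 z h).trans (MemLp.coeFn_toLp (aux_memLp z)).symm)
    · have hz : 0 < ‖z‖ := lt_of_lt_of_le hR h
      refine ⟨R ^ 2 / ‖z‖ ^ 2, by positivity, by rw [min_eq_right h]; field_simp, ?_⟩
      apply Lp.ext
      refine (hF2 z h).trans ?_
      have h3 : ⇑((R ^ 2 / ‖z‖ ^ 2) • ((aux_memLp z).toLp _)) =ᵐ[volume.restrict (Set.Ioo (0:ℝ) 1)]
          fun ξ => (R ^ 2 / ‖z‖ ^ 2) * (z : ℝ → ℝ) ξ ^ 2 := by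
        filter_upwards [Lp.coeFn_smul (R ^ 2 / ‖z‖ ^ 2) ((aux_memLp z).toLp _),
          MemLp.coeFn_toLp (aux_memLp z)] with ξ h1 h2
        rw [h1, Pi.smul_apply, h2, smul_eq_mul]
      have h4 : (fun ξ => R ^ 2 * (z : ℝ → ℝ) ξ ^ 2 / ‖z‖ ^ 2)
          = fun ξ => (R ^ 2 / ‖z‖ ^ 2) * (z : ℝ → ℝ) ξ ^ 2 := by
        funext ξ; ring
      rw [h4]
      exact h3.symm
  obtain ⟨c, hc0, hcA, hFx⟩ := rep x
  obtain ⟨d, hd0, hdB, hFy⟩ := rep y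
  set P := (aux_memLp x).toLp _ with hPdef
  set Q := (aux_memLp y).toLp _ with hQdef
  have hP : ‖P‖ = ‖x‖ ^ 2 := aux_norm_sq x
  have hQ : ‖Q‖ = ‖y‖ ^ 2 := aux_norm_sq y
  have hFxy : ‖F x - F y‖ = ‖c • P - d • Q‖ := by rw [hFx, hFy]
  -- Hölder bound on ‖P - Q‖
  have hPQ : ‖P - Q‖ ≤ (‖x‖ + ‖y‖) * ‖x - y‖ := by
    have hsub : P - Q = (MemLp.sub (aux_memLp x) (aux_memLp y)).toLp _ :=
      (MemLp.toLp_sub (aux_memLp x) (aux_memLp y)).symm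
    rw [hsub, Lp.norm_toLp]
    have hne1 : eLpNorm ((x : ℝ → ℝ) - (y : ℝ → ℝ)) 4 (volume.restrict (Set.Ioo (0:ℝ) 1)) ≠ ⊤ := by
      rw [eLpNorm_congr_ae (Lp.coeFn_sub x y).symm]
      exact Lp.eLpNorm_ne_top (x - y)
    have hne2 : eLpNorm ((x : ℝ → ℝ) + (y : ℝ → ℝ)) 4 (volume.restrict (Set.Ioo (0:ℝ) 1)) ≠ ⊤ := by
      rw [eLpNorm_congr_ae (Lp.coeFn_add x y).symm]
      exact Lp.eLpNorm_ne_top (x + y)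
    have hmono := ENNReal.toReal_mono (ENNReal.mul_ne_top hne1 hne2) (aux_holder x y)
    rw [ENNReal.toReal_mul] at hmono
    have hx4 : (eLpNorm ((x : ℝ → ℝ) - (y : ℝ → ℝ)) 4 (volume.restrict (Set.Ioo (0:ℝ) 1))).toReal = ‖x - y‖ := by
      rw [eLpNorm_congr_ae (Lp.coeFn_sub x y).symm, ← Lp.norm_def]
    have hy4 : (eLpNorm ((x : ℝ → ℝ) + (y : ℝ → ℝ)) 4 (volume.restrict (Set.Ioo (0:ℝ) 1))).toReal = ‖x + y‖ := by
      rw [eLpNorm_congr_ae (Lp.coeFn_add x y).symm, ← Lp.norm_def]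
    rw [hx4, hy4] at hmono
    refine hmono.trans ?_
    have := norm_add_le x y
    have h0 : 0 ≤ ‖x - y‖ := norm_nonneg _
    nlinarith [this, h0]
  -- Lipschitz bound
  have hlip : ‖F x - F y‖ ≤ 2 * R * ‖x - y‖ := by
    rcases eq_or_lt_of_le (by positivity : (0:ℝ) ≤ ‖x‖ + ‖y‖) with h0 | h0
    · have hx0 : ‖x‖ = 0 := by
        have := norm_nonneg x; have := norm_nonneg y; linarith
      have hy0 : ‖y‖ = 0 := by
        have := norm_nonneg x; have := norm_nonneg y; linarith
      have hxy : x = y := by rw [norm_eq_zero.mp hx0, norm_eq_zero.mp hy0]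
      rw [hxy, sub_self, norm_zero]
      positivity
    · have hm := master_ineq hR (norm_nonneg x) (norm_nonneg y) hc0 hd0 hcA hdB hP hQ
      have h2 := mul_le_mul_of_nonneg_left hPQ (by positivity : (0:ℝ) ≤ 2 * R)
      rw [hFxy]
      have hchain : (‖x‖ + ‖y‖) * ‖c • P - d • Q‖ ≤ (‖x‖ + ‖y‖) * (2 * R * ‖x - y‖) := by
        calc (‖x‖ + ‖y‖) * ‖c • P - d • Q‖ ≤ 2 * R * ‖P - Q‖ := hm
        _ ≤ 2 * R * ((‖x‖ + ‖y‖) * ‖x - y‖) := h2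
        _ = (‖x‖ + ‖y‖) * (2 * R * ‖x - y‖) := by ring
      exact le_of_mul_le_mul_left hchain h0
  -- Boundedness
  have hbnd : ‖F x - F y‖ ≤ 2 * R ^ 2 := by
    rw [hFxy]
    have htri : ‖c • P - d • Q‖ ≤ ‖c • P‖ + ‖d • Q‖ := norm_sub_le _ _
    rw [norm_smul, norm_smul, Real.norm_eq_abs, Real.norm_eq_abs,
      abs_of_nonneg hc0, abs_of_nonneg hd0, hP, hQ] at htri
    have m1 : c * ‖x‖ ^ 2 ≤ R ^ 2 := by
      rw [hcA]
      have h1 : min ‖x‖ R ≤ R := min_le_right _ _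
      have h2 : 0 ≤ min ‖x‖ R := le_min (norm_nonneg x) hR.le
      nlinarith
    have m2 : d * ‖y‖ ^ 2 ≤ R ^ 2 := by
      rw [hdB]
      have h1 : min ‖y‖ R ≤ R := min_le_right _ _
      have h2 : 0 ≤ min ‖y‖ R := le_min (norm_nonneg y) hR.le
      nlinarith
    linarith
  -- interpolation
  have hD0 : 0 ≤ ‖F x - F y‖ := norm_nonneg _
  have hL0 : 0 ≤ ‖x - y‖ := norm_nonneg _
  rcases eq_or_lt_of_le hD0 with h0 | h0
  · rw [← h0]
    positivity
  · have step1 : ‖F x - F y‖ ≤ (2 * R ^ 2) ^ ((1:ℝ) - γ) * (2 * R * ‖x - y‖) ^ γ := by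
      have hsplit : ‖F x - F y‖ = ‖F x - F y‖ ^ ((1:ℝ) - γ) * ‖F x - F y‖ ^ γ := by
        rw [← Real.rpow_add h0]
        norm_num
      rw [hsplit]
      exact mul_le_mul (Real.rpow_le_rpow hD0 hbnd (by linarith))
        (Real.rpow_le_rpow hD0 hlip hγ0)
        (Real.rpow_nonneg hD0 γ) (Real.rpow_nonneg (by positivity) _)
    refine step1.trans ?_
    have hA1 : (2 * R * ‖x - y‖) ^ γ = (2 * R) ^ γ * ‖x - y‖ ^ γ :=
      Real.mul_rpow (by positivity) hL0
    have hA2 : ((2:ℝ) * R ^ 2) ^ ((1:ℝ) - γ) = 2 ^ ((1:ℝ) - γ) * (R ^ 2) ^ ((1:ℝ) - γ) :=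
      Real.mul_rpow (by norm_num) (by positivity)
    have hA3 : ((2:ℝ) * R) ^ γ = 2 ^ γ * R ^ γ := Real.mul_rpow (by norm_num) hR.le
    have hA4 : ((R:ℝ) ^ 2) ^ ((1:ℝ) - γ) = R ^ ((2:ℝ) * (1 - γ)) := by
      rw [← Real.rpow_natCast R 2, ← Real.rpow_mul hR.le]
      norm_num
    have h2γ : (2:ℝ) ^ ((1:ℝ) - γ) * 2 ^ γ = 2 := by
      rw [← Real.rpow_add (by norm_num : (0:ℝ) < 2)]
      norm_num
    have hRγ : R ^ ((2:ℝ) * (1 - γ)) * R ^ γ = R ^ ((2:ℝ) - γ) := by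
      rw [← Real.rpow_add hR]
      congr 1
      ring
    have hfin : ((2:ℝ) * R) ^ ((2:ℝ) - γ) = 2 ^ ((2:ℝ) - γ) * R ^ ((2:ℝ) - γ) :=
      Real.mul_rpow (by norm_num) hR.le
    have h2le : (2:ℝ) ≤ 2 ^ ((2:ℝ) - γ) := by
      calc (2:ℝ) = 2 ^ (1:ℝ) := (Real.rpow_one 2).symm
      _ ≤ 2 ^ ((2:ℝ) - γ) := Real.rpow_le_rpow_of_exponent_le (by norm_num) (by linarith)
    calc (2 * R ^ 2) ^ ((1:ℝ) - γ) * (2 * R * ‖x - y‖) ^ γ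
        = (2 ^ ((1:ℝ) - γ) * 2 ^ γ) * (R ^ ((2:ℝ) * (1 - γ)) * R ^ γ) * ‖x - y‖ ^ γ := by
          rw [hA1, hA2, hA3, hA4]; ring
      _ = 2 * R ^ ((2:ℝ) - γ) * ‖x - y‖ ^ γ := by rw [h2γ, hRγ]
      _ ≤ 2 ^ ((2:ℝ) - γ) * R ^ ((2:ℝ) - γ) * ‖x - y‖ ^ γ := by
          have hr1 : (0:ℝ) ≤ R ^ ((2:ℝ) - γ) := Real.rpow_nonneg hR.le _
          have hr2 : (0:ℝ) ≤ ‖x - y‖ ^ γ := Real.rpow_nonneg hL0 _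
          nlinarith [h2le, hr1, hr2, mul_nonneg hr1 hr2]
      _ = (2 * R) ^ ((2:ℝ) - γ) * ‖x - y‖ ^ γ := by rw [hfin]
      _ = (2 * R) ^ (2 - γ) * ‖x - y‖ ^ γ := by norm_num
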